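/- For every natural number n, the symmetric group on Fin n (the group of all permutations of Fin n) is good. -/

import Mathlib

/-- The conjugacy class of `e` in `G`. -/
def conjClass {G : Type*} [Group G] (e : G) : Set G := {x | ∃ g : G, g * e * g⁻¹ = x}

/-- A conjugacy class `C` is good in `G` if for every `c ∈ C` there is `z ∈ C` such
that every power of `c` commuting with `z` commutes with every element of `⟨C⟩`. -/
def GoodClass {G : Type*} [Group G] (C : Set G) : Prop :=
  ∀ c ∈ C, ∃ z ∈ C, ∀ k : ℤ, c ^ k * z = z * c ^ k →
    ∀ h ∈ Subgroup.closure C, c ^ k * h = h * c ^ k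

/-- A group is good if all of its finite conjugacy classes are good in it. -/
def GoodGroup (G : Type*) [Group G] : Prop :=
  ∀ e : G, (conjClass e).Finite → GoodClass (conjClass e)

open Equiv Equiv.Perm
set_option linter.unusedSectionVars false
set_option linter.deprecated false
section Base
variable {α : Type*} [DecidableEq α] [Fintype α]


/-- length of the cycle of `c` through `p` -/
noncomputable def clen (c : Perm α) (p : α) : ℕ := (c.cycleOf p).support.card

lemma clen_zpow_fix_iff {c : Perm α} {p : α} (hp : c p ≠ p) (k : ℤ) :
    (c ^ k) p = p ↔ (clen c p : ℤ) ∣ k := by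
  classical
  set σ := c.cycleOf p with hσdef
  have hcyc : σ.IsCycle := Equiv.Perm.isCycle_cycleOf c hp
  have hord : orderOf σ = clen c p := hcyc.orderOf
  have hbr : ∀ n : ℤ, (σ ^ n) p = (c ^ n) p := fun n => Equiv.Perm.cycleOf_zpow_apply_self c p n
  constructor
  · intro h
    rw [← hord]
    rw [orderOf_dvd_iff_zpow_eq_one]
    -- show σ ^ k = 1
    ext q
    by_cases hq : σ q = q
    · rw [Equiv.Perm.zpow_apply_eq_self_of_apply_eq_self hq, Equiv.Perm.one_apply]
    · have hpσ : σ p ≠ p := by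
        rw [Equiv.Perm.cycleOf_apply_self]; exact hp
      obtain ⟨i, hi⟩ := hcyc.sameCycle hpσ hq
      have : (σ ^ k) ((σ ^ i) p) = (σ ^ i) ((σ ^ k) p) := by
        rw [← Equiv.Perm.mul_apply, ← Equiv.Perm.mul_apply, ← zpow_add, ← zpow_add, add_comm]
      rw [hi] at this
      rw [this, hbr k, h, ← hi]
      rfl
  · intro h
    have : σ ^ k = 1 := by
      rw [← orderOf_dvd_iff_zpow_eq_one, hord]; exact h
    rw [← hbr k, this, Equiv.Perm.one_apply]

lemma clen_same {c : Perm α} {p q : α} (h : c.SameCycle p q) : clen c p = clen c q := by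
  unfold clen; rw [h.cycleOf_eq]

lemma clen_zpow_apply (c : Perm α) (p : α) (i : ℤ) : clen c ((c ^ i) p) = clen c p :=
  (clen_same ⟨i, rfl⟩).symm

lemma zpow_moved {c : Perm α} {p : α} (hp : c p ≠ p) (i : ℤ) : c ((c ^ i) p) ≠ (c ^ i) p := by
  intro h
  apply hp
  have hc : c ((c ^ i) p) = (c ^ i) (c p) := by
    rw [← Equiv.Perm.mul_apply, ← Equiv.Perm.mul_apply, ← zpow_one_add, ← zpow_add_one,
      add_comm]
  rw [hc] at h
  exact (Equiv.injective _) h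

lemma two_le_clen {c : Perm α} {p : α} (hp : c p ≠ p) : 2 ≤ clen c p :=
  (Equiv.Perm.isCycle_cycleOf c hp).two_le_card_support

lemma csq_ne_of_three_le_clen {c : Perm α} {p : α} (hp : c p ≠ p) (h3 : 3 ≤ clen c p) :
    c (c p) ≠ p := by
  intro h
  have : (c ^ (2:ℤ)) p = p := by
    have : c (c p) = (c ^ (2:ℤ)) p := by
      rw [show (2:ℤ) = 1 + 1 by norm_num, zpow_add, zpow_one, Equiv.Perm.mul_apply]
    rw [← this, h]
  rw [clen_zpow_fix_iff hp] at this
  have := Int.le_of_dvd (by norm_num) this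
  omega

/-- transfer a kill across cycles of equal length -/
lemma kill_spread {c : Perm α} {p q : α} (hp : c p ≠ p) (hq : c q ≠ q)
    (hl : clen c p = clen c q) {k : ℤ} (h : (c ^ k) p = p) : (c ^ k) q = q := by
  rw [clen_zpow_fix_iff hp] at h
  rw [clen_zpow_fix_iff hq, ← hl]
  exact h

lemma fixed_zpow {c : Perm α} {p : α} (hp : c p = p) (k : ℤ) : (c ^ k) p = p :=
  Equiv.Perm.zpow_apply_eq_self_of_apply_eq_self hp k

lemma sameCycle_of_fixed {c : Perm α} {p q : α} (hp : c p = p) (h : c.SameCycle p q) : q = p := by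
  obtain ⟨i, hi⟩ := h
  rw [← hi, fixed_zpow hp]

lemma not_sameCycle_of_clen_ne {c : Perm α} {p q : α} (h : clen c p ≠ clen c q) :
    ¬ c.SameCycle p q := fun hs => h (clen_same hs)

lemma perm_inv_eq_of_eq {g : Perm α} {a b : α} (h : g a = b) : g⁻¹ b = a := by
  rw [← h]; exact Equiv.symm_apply_apply g a



lemma capp (c : Perm α) (i : ℤ) (q : α) : c ((c ^ i) q) = (c ^ (1 + i)) q := by
  rw [zpow_one_add, Equiv.Perm.mul_apply]

lemma cswap (c : Perm α) (i : ℤ) (q : α) : c ((c ^ i) q) = (c ^ i) (c q) := by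
  rw [← Equiv.Perm.mul_apply, ← Equiv.Perm.mul_apply, ← zpow_one_add, ← zpow_add_one, add_comm]

lemma sameCycle_of_zpow_eq {c : Perm α} {x y : α} {a b : ℤ} (h : (c ^ a) x = (c ^ b) y) :
    c.SameCycle x y := by
  refine ⟨-b + a, ?_⟩
  rw [zpow_add, Equiv.Perm.mul_apply, h, ← Equiv.Perm.mul_apply, ← zpow_add,
    neg_add_cancel, zpow_zero, Equiv.Perm.one_apply]

section Kit
variable {c d G : Perm α}

/-- FIX kit: swap a fixed point `w` with a moved point `y`. -/
lemma kit_fix {w y : α}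
    (hE : ∀ q, G⁻¹ (d (G (c q))) = c (G⁻¹ (d (G q))))
    (hdy : ∃ j : ℤ, d y = (c ^ j) y)
    (hw : c w = w) (hy1 : c y ≠ y)
    (hGw : G w = y)
    (hGfy : ∀ q, c.SameCycle y q → q ≠ y → G q = q) : d y = y := by
  by_contra hne
  obtain ⟨j, hj⟩ := hdy
  have hjy : (c ^ j) y ≠ y := fun h => hne (hj.trans h)
  have hfix : G ((c ^ j) y) = (c ^ j) y := hGfy _ ⟨j, rfl⟩ hjy
  have hEw : G⁻¹ (d (G w)) = (c ^ j) y := by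
    rw [hGw, hj, perm_inv_eq_of_eq hfix]
  have := hE w
  rw [hw, hEw] at this
  -- (c^j) y = c ((c^j) y)
  have hmv : c ((c ^ j) y) ≠ (c ^ j) y := by
    rw [cswap]; intro h
    exact hy1 ((Equiv.injective _) h)
  exact hmv this.symm

/-- PAIR kit: swap two moved points in different cycles, one of clen ≥ 3. -/
lemma kit_pair {x y : α}
    (hdc : ∀ q, d (c q) = c (d q))
    (hE : ∀ q, G⁻¹ (d (G (c q))) = c (G⁻¹ (d (G q))))
    (hdx : ∃ j : ℤ, d x = (c ^ j) x) (hdy : ∃ j : ℤ, d y = (c ^ j) y)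
    (hxy : ¬ c.SameCycle x y)
    (hx2 : c (c x) ≠ x)
    (hGx : G x = y) (hGy : G y = x)
    (hGfx : ∀ q, c.SameCycle x q → q ≠ x → G q = q)
    (hGfy : ∀ q, c.SameCycle y q → q ≠ y → G q = q) :
    d x = x ∧ d y = y := by
  obtain ⟨p, hp⟩ := hdx
  have hx1 : c x ≠ x := fun h => hx2 (by rw [h, h])
  have hGcx : G (c x) = c x := hGfx _ ⟨1, by rw [zpow_one]⟩ hx1
  have hEcx : G⁻¹ (d (G (c x))) = G⁻¹ ((c ^ (1 + p)) x) := by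
    rw [hGcx, hdc, hp, capp]
  -- Step 1 : d y = y
  have hdyy : d y = y := by
    by_contra hne
    obtain ⟨j, hj⟩ := hdy
    have hjy : (c ^ j) y ≠ y := fun h => hne (hj.trans h)
    have hEx : G⁻¹ (d (G x)) = (c ^ j) y := by
      rw [hGx, hj, perm_inv_eq_of_eq (hGfy _ ⟨j, rfl⟩ hjy)]
    have hkey := hE x
    rw [hEx, hEcx, capp] at hkey
    -- hkey : G⁻¹ ((c^(1+p)) x) = (c^(1+j)) y
    by_cases hc : (c ^ (1 + p)) x = x
    · rw [hc, perm_inv_eq_of_eq hGy] at hkey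
      -- hkey : y = (c^(1+j)) y
      have hkey2 := hE (c x)
      have hl : G⁻¹ (d (G (c (c x)))) = c x := by
        have hccx : G (c (c x)) = c (c x) :=
          hGfx _ ⟨2, by rw [show (2:ℤ) = 1 + 1 by norm_num, zpow_add, zpow_one]; rfl⟩ hx2
        have : d (c (c x)) = c x := by
          rw [hdc, hdc, hp, capp, capp, ← capp c (1+p), hc]
        rw [hccx, this, perm_inv_eq_of_eq hGcx]
      have hr : c (G⁻¹ (d (G (c x)))) = c y := by
        rw [hEcx, hc, perm_inv_eq_of_eq hGy]
      rw [hl, hr] at hkey2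
      have : x = y := Equiv.injective c hkey2
      exact hxy (this ▸ Equiv.Perm.SameCycle.refl c x)
    · rw [perm_inv_eq_of_eq (hGfx _ ⟨1 + p, rfl⟩ hc)] at hkey
      exact hxy (sameCycle_of_zpow_eq hkey)
  -- Step 2 : d x = x
  refine ⟨?_, hdyy⟩
  by_contra hne
  have hpx : (c ^ p) x ≠ x := fun h => hne (hp.trans h)
  have hEx : G⁻¹ (d (G x)) = x := by rw [hGx, hdyy, perm_inv_eq_of_eq hGx]
  have hkey := hE x
  rw [hEx, hEcx] at hkey
  by_cases hc : (c ^ (1 + p)) x = x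
  · rw [hc, perm_inv_eq_of_eq hGy] at hkey
    exact hxy ⟨1, by rw [zpow_one]; exact hkey.symm⟩
  · rw [perm_inv_eq_of_eq (hGfx _ ⟨1 + p, rfl⟩ hc)] at hkey
    rw [← capp] at hkey
    exact hpx (Equiv.injective c hkey)

/-- TRIPLE kit: 3-cycle `x → y → z → x` on three points in pairwise different cycles. -/
lemma kit_triple {x y z : α}
    (hdc : ∀ q, d (c q) = c (d q))
    (hE : ∀ q, G⁻¹ (d (G (c q))) = c (G⁻¹ (d (G q))))
    (hfixd : ∀ p, c p = p → d p = p)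
    (hdx : ∃ j : ℤ, d x = (c ^ j) x) (hdy : ∃ j : ℤ, d y = (c ^ j) y)
    (hdz : ∃ j : ℤ, d z = (c ^ j) z)
    (hxy : ¬ c.SameCycle x y) (hxz : ¬ c.SameCycle x z) (hyz : ¬ c.SameCycle y z)
    (hGx : G x = y) (hGy : G y = z) (hGz : G z = x)
    (hGfx : ∀ q, c.SameCycle x q → q ≠ x → G q = q)
    (hGfy : ∀ q, c.SameCycle y q → q ≠ y → G q = q)
    (hGfz : ∀ q, c.SameCycle z q → q ≠ z → G q = q) :
    d x = x ∧ d y = y ∧ d z = z := by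
  obtain ⟨p, hp⟩ := hdx
  -- Step 1 : d y = y
  have hdyy : d y = y := by
    by_contra hne
    obtain ⟨j, hj⟩ := hdy
    have hjy : (c ^ j) y ≠ y := fun h => hne (hj.trans h)
    have hy1 : c y ≠ y := fun h => hne (hfixd y h)
    have hEx : G⁻¹ (d (G x)) = (c ^ j) y := by
      rw [hGx, hj, perm_inv_eq_of_eq (hGfy _ ⟨j, rfl⟩ hjy)]
    by_cases hcx : c x = x
    · have := hE x
      rw [hcx, hEx] at this
      have hmv : c ((c ^ j) y) ≠ (c ^ j) y := by
        rw [cswap]; intro h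
        exact hy1 ((Equiv.injective _) h)
      exact hmv this.symm
    · have hkey := hE x
      rw [hEx] at hkey
      have hEcx : G⁻¹ (d (G (c x))) = G⁻¹ ((c ^ (1 + p)) x) := by
        rw [hGfx _ ⟨1, by rw [zpow_one]⟩ hcx, hdc, hp, capp]
      rw [hEcx, capp] at hkey
      by_cases hc : (c ^ (1 + p)) x = x
      · rw [hc, perm_inv_eq_of_eq hGz] at hkey
        exact hyz (sameCycle_of_zpow_eq (a := (0:ℤ)) (b := 1 + j)
          (by rw [zpow_zero, Equiv.Perm.one_apply]; exact hkey)).symm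
      · rw [perm_inv_eq_of_eq (hGfx _ ⟨1 + p, rfl⟩ hc)] at hkey
        exact hxy (sameCycle_of_zpow_eq hkey)
  -- Step 2 : d x = x
  have hdxx : d x = x := by
    by_contra hne
    have hpx : (c ^ p) x ≠ x := fun h => hne (hp.trans h)
    have hcx : c x ≠ x := fun h => hne (hfixd x h)
    have hEx : G⁻¹ (d (G x)) = x := by rw [hGx, hdyy, perm_inv_eq_of_eq hGx]
    have hkey := hE x
    have hEcx : G⁻¹ (d (G (c x))) = G⁻¹ ((c ^ (1 + p)) x) := by
      rw [hGfx _ ⟨1, by rw [zpow_one]⟩ hcx, hdc, hp, capp]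
    rw [hEx, hEcx] at hkey
    by_cases hc : (c ^ (1 + p)) x = x
    · rw [hc, perm_inv_eq_of_eq hGz] at hkey
      exact hxz ⟨1, by rw [zpow_one]; exact hkey.symm⟩
    · rw [perm_inv_eq_of_eq (hGfx _ ⟨1 + p, rfl⟩ hc), ← capp] at hkey
      exact hpx (Equiv.injective c hkey)
  -- Step 3 : d z = z
  refine ⟨hdxx, hdyy, ?_⟩
  by_contra hne
  obtain ⟨r, hr⟩ := hdz
  have hrz : (c ^ r) z ≠ z := fun h => hne (hr.trans h)
  have hcz : c z ≠ z := fun h => hne (hfixd z h)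
  have hEz : G⁻¹ (d (G z)) = z := by rw [hGz, hdxx, perm_inv_eq_of_eq hGz]
  have hkey := hE z
  have hEcz : G⁻¹ (d (G (c z))) = G⁻¹ ((c ^ (1 + r)) z) := by
    rw [hGfz _ ⟨1, by rw [zpow_one]⟩ hcz, hdc, hr, capp]
  rw [hEz, hEcz] at hkey
  by_cases hc : (c ^ (1 + r)) z = z
  · rw [hc, perm_inv_eq_of_eq hGy] at hkey
    exact hyz (sameCycle_of_zpow_eq (a := (0:ℤ)) (b := 1)
      (by rw [zpow_zero, zpow_one, Equiv.Perm.one_apply]; exact hkey))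
  · rw [perm_inv_eq_of_eq (hGfz _ ⟨1 + r, rfl⟩ hc), ← capp] at hkey
    exact hrz (Equiv.injective c hkey)

/-- LONG kit: swap two adjacent points in a single cycle of length ≥ 4. -/
lemma kit_long {a : α}
    (hdc : ∀ q, d (c q) = c (d q))
    (hE : ∀ q, G⁻¹ (d (G (c q))) = c (G⁻¹ (d (G q))))
    (hda : ∃ j : ℤ, d a = (c ^ j) a)
    (h10 : c a ≠ a) (h20 : c (c a) ≠ a) (h30 : c (c (c a)) ≠ a)
    (hGa : G a = c a) (hGa1 : G (c a) = a)
    (hGf : ∀ q, c.SameCycle a q → q ≠ a → q ≠ c a → G q = q) : d a = a := by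
  by_contra hne
  obtain ⟨j, hj⟩ := hda
  have hja : (c ^ j) a ≠ a := fun h => hne (hj.trans h)
  have hEa1 : G⁻¹ (d (G (c a))) = G⁻¹ ((c ^ j) a) := by rw [hGa1, hj]
  have hEa : G⁻¹ (d (G a)) = G⁻¹ (c ((c ^ j) a)) := by rw [hGa, hdc, hj]
  have hkey := hE a
  rw [hEa1, hEa] at hkey
  -- hkey : G⁻¹ ((c^j) a) = c (G⁻¹ (c ((c^j) a)))
  by_cases hy0 : (c ^ j) a = c a
  · rw [hy0] at hkey
    have h21 : c (c a) ≠ c a := fun h => h10 (Equiv.injective c h)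
    have hfix : G (c (c a)) = c (c a) :=
      hGf _ ⟨1 + j, by rw [← capp, hy0]⟩ h20 h21
    rw [perm_inv_eq_of_eq hGa, perm_inv_eq_of_eq hfix] at hkey
    exact h30 hkey.symm
  · rw [perm_inv_eq_of_eq (hGf _ ⟨j, rfl⟩ hja hy0)] at hkey
    by_cases hc1 : c ((c ^ j) a) = a
    · rw [hc1, perm_inv_eq_of_eq hGa1] at hkey
      -- hkey : (c^j) a = c (c a)
      exact h30 (by rw [← hkey]; exact hc1)
    · by_cases hc2 : c ((c ^ j) a) = c a
      · exact hja (Equiv.injective c hc2)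
      · have : c.SameCycle a (c ((c ^ j) a)) := ⟨1 + j, by rw [capp]⟩
        rw [perm_inv_eq_of_eq (hGf _ this hc1 hc2)] at hkey
        -- hkey : (c^j) a = c (c ((c^j) a))
        apply h20
        have h1 : c (c ((c ^ j) a)) = (c ^ j) (c (c a)) := by rw [cswap, cswap]
        rw [h1] at hkey
        have : (c ^ j) (c (c a)) = (c ^ j) a := hkey.symm
        exact (Equiv.injective _) this
end Kit



/-- the points of a list of swap-pairs -/
def ptsL (P : List (α × α)) : List α := P.flatMap fun p => [p.1, p.2]

def swapProd (P : List (α × α)) : Perm α := (P.map fun p => Equiv.swap p.1 p.2).prod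

lemma ptsL_cons (a : α × α) (P : List (α × α)) : ptsL (a :: P) = a.1 :: a.2 :: ptsL P := rfl

lemma swapProd_cons (a : α × α) (P : List (α × α)) :
    swapProd (a :: P) = Equiv.swap a.1 a.2 * swapProd P := rfl

lemma swapProd_fix {P : List (α × α)} {q : α} (h : q ∉ ptsL P) : swapProd P q = q := by
  induction P with
  | nil => rfl
  | cons a T ih =>
    rw [ptsL_cons] at h
    simp only [List.mem_cons, not_or] at h
    obtain ⟨h1, h2, h3⟩ := h
    rw [swapProd_cons, Equiv.Perm.mul_apply, ih (fun hq => h3 hq),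
      Equiv.swap_apply_of_ne_of_ne h1 h2]

lemma swapProd_app {P : List (α × α)} (hnd : (ptsL P).Nodup) {a b : α} (h : (a, b) ∈ P) :
    swapProd P a = b ∧ swapProd P b = a := by
  induction P with
  | nil => simp at h
  | cons u T ih =>
    rw [ptsL_cons] at hnd
    have h1 : u.1 ∉ (u.2 :: ptsL T) := (List.nodup_cons.mp hnd).1
    have hnd2 := (List.nodup_cons.mp hnd).2
    have h2 : u.2 ∉ ptsL T := (List.nodup_cons.mp hnd2).1
    have hndT := (List.nodup_cons.mp hnd2).2
    rcases List.mem_cons.mp h with heq | hmem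
    · have ha : a = u.1 := by rw [← heq]
      have hb : b = u.2 := by rw [← heq]
      subst ha; subst hb
      constructor
      · rw [swapProd_cons, Equiv.Perm.mul_apply,
          swapProd_fix (by simpa using fun h' => (by simp at h1; exact h1.2 h' : False)),
          Equiv.swap_apply_left]
      · rw [swapProd_cons, Equiv.Perm.mul_apply, swapProd_fix h2, Equiv.swap_apply_right]
    · have hmema : a ∈ ptsL T := by
        unfold ptsL; rw [List.mem_flatMap]; exact ⟨(a, b), hmem, by simp⟩
      have hmemb : b ∈ ptsL T := by
        unfold ptsL; rw [List.mem_flatMap]; exact ⟨(a, b), hmem, by simp⟩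
      obtain ⟨iha, ihb⟩ := ih hndT hmem
      constructor
      · rw [swapProd_cons, Equiv.Perm.mul_apply, iha, Equiv.swap_apply_of_ne_of_ne]
        · intro h'; rw [h'] at hmemb; simp at h1; exact h1.2 hmemb
        · intro h'; rw [h'] at hmemb; exact h2 hmemb
      · rw [swapProd_cons, Equiv.Perm.mul_apply, ihb, Equiv.swap_apply_of_ne_of_ne]
        · intro h'; rw [h'] at hmema; simp at h1; exact h1.2 hmema
        · intro h'; rw [h'] at hmema; exact h2 hmema

/-- chunk a list into consecutive pairs -/
def chunk2 : List β → List (β × β)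
  | a :: b :: t => (a, b) :: chunk2 t
  | _ => []

lemma chunk2_bind {β : Type*} : ∀ (l : List β), Even l.length →
    (chunk2 l).flatMap (fun p => [p.1, p.2]) = l
  | [], _ => rfl
  | [a], h => by simp at h
  | a :: b :: t, h => by
    have ht : Even t.length := by
      simp only [List.length_cons] at h
      rcases h with ⟨m, hm⟩
      exact ⟨m - 1, by omega⟩
    show a :: b :: (chunk2 t).flatMap _ = _
    rw [chunk2_bind t ht]



lemma chunk2_mem {β : Type*} : ∀ {l : List β} {a b : β}, (a, b) ∈ chunk2 l → a ∈ l ∧ b ∈ l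
  | [], a, b, h => by simp [chunk2] at h
  | [x], a, b, h => by simp [chunk2] at h
  | x :: y :: t, a, b, h => by
    rcases List.mem_cons.mp h with heq | hmem
    · have h1 : a = x := congrArg Prod.fst heq
      have h2 : b = y := congrArg Prod.snd heq
      subst h1; subst h2; exact ⟨by simp, by simp⟩
    · obtain ⟨ha, hb⟩ := chunk2_mem hmem
      exact ⟨by simp [ha], by simp [hb]⟩

lemma chunk2_ne {β : Type*} : ∀ {l : List β}, l.Nodup → ∀ {a b : β}, (a, b) ∈ chunk2 l → a ≠ b
  | [], _, a, b, h => by simp [chunk2] at h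
  | [x], _, a, b, h => by simp [chunk2] at h
  | x :: y :: t, hnd, a, b, h => by
    rcases List.mem_cons.mp h with heq | hmem
    · have h1 : a = x := congrArg Prod.fst heq
      have h2 : b = y := congrArg Prod.snd heq
      subst h1; subst h2
      intro hxy
      exact (List.nodup_cons.mp hnd).1 (hxy ▸ List.mem_cons_self)
    · exact chunk2_ne ((List.nodup_cons.mp (List.nodup_cons.mp hnd).2).2) hmem

lemma chunk2_cover {β : Type*} : ∀ {l : List β}, Even l.length → ∀ {x : β}, x ∈ l →
    ∃ p ∈ chunk2 l, x = p.1 ∨ x = p.2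
  | [], _, x, h => by simp at h
  | [a], he, x, h => by simp at he
  | a :: b :: t, he, x, h => by
    have ht : Even t.length := by
      simp only [List.length_cons] at he
      rcases he with ⟨m, hm⟩
      exact ⟨m - 1, by omega⟩
    rcases List.mem_cons.mp h with h1 | h2
    · exact ⟨(a, b), List.mem_cons_self, Or.inl h1⟩
    · rcases List.mem_cons.mp h2 with h3 | h4
      · exact ⟨(a, b), List.mem_cons_self, Or.inr h3⟩
      · obtain ⟨p, hp, hx⟩ := chunk2_cover ht h4
        exact ⟨p, List.mem_cons_of_mem _ hp, hx⟩

end Base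

section Engine
variable {α : Type*} [DecidableEq α] [Fintype α]

lemma pairs_kill (c G : Perm α) (rep : ℕ → α) (S : List ℕ)
    (hrep : ∀ ℓ ∈ S, c (rep ℓ) ≠ rep ℓ ∧ clen c (rep ℓ) = ℓ)
    (hnd : S.Nodup) (hev : Even S.length) (h2 : ∀ ℓ ∈ S, 2 ≤ ℓ)
    (hGagree : ∀ a b, (a, b) ∈ chunk2 S → G (rep a) = rep b ∧ G (rep b) = rep a)
    (hGfix : ∀ ℓ ∈ S, ∀ q, c.SameCycle (rep ℓ) q → q ≠ rep ℓ → G q = q)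
    (k : ℤ)
    (hE : ∀ q, G⁻¹ ((c ^ k) (G (c q))) = c (G⁻¹ ((c ^ k) (G q)))) :
    ∀ ℓ ∈ S, (c ^ k) (rep ℓ) = rep ℓ := by
  intro ℓ hℓ
  obtain ⟨⟨a, b⟩, hpr, hor⟩ := chunk2_cover hev hℓ
  simp only at hor
  have hab : a ≠ b := chunk2_ne hnd hpr
  have hmema := (chunk2_mem hpr).1
  have hmemb := (chunk2_mem hpr).2
  have hdc : ∀ q, (c ^ k) (c q) = c ((c ^ k) q) := fun q => (cswap c k q).symm
  have h3 : 3 ≤ a ∨ 3 ≤ b := by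
    have := h2 a hmema; have := h2 b hmemb
    rcases Nat.lt_or_ge a 3 with h | h
    · right; omega
    · left; exact h
  have hscne : ¬ c.SameCycle (rep a) (rep b) := by
    apply not_sameCycle_of_clen_ne
    rw [(hrep a hmema).2, (hrep b hmemb).2]
    exact hab
  rcases h3 with h3a | h3b
  · have hres := kit_pair (c := c) (d := c ^ k) (G := G) (x := rep a) (y := rep b) hdc hE
      ⟨k, rfl⟩ ⟨k, rfl⟩ hscne
      (csq_ne_of_three_le_clen (hrep a hmema).1 (by rw [(hrep a hmema).2]; exact h3a))
      (hGagree a b hpr).1 (hGagree a b hpr).2 (hGfix a hmema) (hGfix b hmemb)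
    rcases hor with h | h
    · rw [h]; exact hres.1
    · rw [h]; exact hres.2
  · have hres := kit_pair (c := c) (d := c ^ k) (G := G) (x := rep b) (y := rep a) hdc hE
      ⟨k, rfl⟩ ⟨k, rfl⟩ (fun hs => hscne hs.symm)
      (csq_ne_of_three_le_clen (hrep b hmemb).1 (by rw [(hrep b hmemb).2]; exact h3b))
      (hGagree a b hpr).2 (hGagree a b hpr).1 (hGfix b hmemb) (hGfix a hmema)
    rcases hor with h | h
    · rw [h]; exact hres.2
    · rw [h]; exact hres.1

lemma final_ext (c : Perm α) (k : ℤ)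
    (hkill : ∀ ℓ ∈ c.support.image (clen c), ∃ r, c r ≠ r ∧ clen c r = ℓ ∧ (c ^ k) r = r) :
    c ^ k = 1 := by
  ext q
  rw [Equiv.Perm.one_apply]
  by_cases hq : c q = q
  · exact fixed_zpow hq k
  · have hmem : clen c q ∈ c.support.image (clen c) :=
      Finset.mem_image.mpr ⟨q, Equiv.Perm.mem_support.mpr hq, rfl⟩
    obtain ⟨r, hr1, hr2, hr3⟩ := hkill _ hmem
    exact kill_spread hr1 hq hr2 hr3

/-- derive the pointwise conjugated commutation from the hypothesis -/
lemma hE_of_commute {c G : Perm α} {k : ℤ} (H : Commute (c ^ k) (G * c * G⁻¹)) :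
    ∀ q, G⁻¹ ((c ^ k) (G (c q))) = c (G⁻¹ ((c ^ k) (G q))) := by
  have h1 : (G⁻¹ * c ^ k * G) * c = c * (G⁻¹ * c ^ k * G) := by
    have := H.eq
    calc G⁻¹ * c ^ k * G * c = G⁻¹ * (c ^ k * (G * c * G⁻¹)) * G := by group
    _ = G⁻¹ * ((G * c * G⁻¹) * c ^ k) * G := by rw [this]
    _ = c * (G⁻¹ * c ^ k * G) := by group
  intro q
  have := Equiv.Perm.ext_iff.mp h1 q
  simpa [Equiv.Perm.mul_apply] using this

end Engine

section Specials

lemma fin2comm : ∀ u v : Equiv.Perm (Fin 2), u * v = v * u := by decide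

lemma fin3comm : ∀ u v : Equiv.Perm (Fin 3), (∀ q, u q ≠ q) → (∀ q, v q ≠ q) →
    u * v = v * u := by decide

set_option maxHeartbeats 1000000 in
lemma fin4comm : ∀ u v : Equiv.Perm (Fin 4), (∀ q, u q ≠ q) → (∀ q, u (u q) = q) →
    (∀ q, v q ≠ q) → (∀ q, v (v q) = q) → u * v = v * u := by decide

variable {α : Type*} [DecidableEq α] [Fintype α]

/-- all conjugates of `c` commute with each other -/
def AbCl (c : Perm α) : Prop :=
  ∀ y z : Perm α, (∃ g : Perm α, g * c * g⁻¹ = y) → (∃ g : Perm α, g * c * g⁻¹ = z) →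
    y * z = z * y

lemma cnj_apply (g c : Perm α) (p : α) : (g * c * g⁻¹) p = g (c (g⁻¹ p)) := by
  simp [Equiv.Perm.mul_apply]

lemma conj_derange {c : Perm α} (hc : ∀ p, c p ≠ p) (g : Perm α) (p : α) :
    (g * c * g⁻¹) p ≠ p := by
  rw [cnj_apply]
  intro h
  have h2 : c (g⁻¹ p) = g⁻¹ p := by
    have := congrArg (⇑g⁻¹) h
    rwa [show ∀ x, g⁻¹ (g x) = x from Equiv.symm_apply_apply g] at this
  exact hc _ h2

lemma conj_invol {c : Perm α} (hc : ∀ p, c (c p) = p) (g : Perm α) (p : α) :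
    (g * c * g⁻¹) ((g * c * g⁻¹) p) = p := by
  rw [cnj_apply, cnj_apply, show ∀ x, g⁻¹ (g x) = x from Equiv.symm_apply_apply g, hc,
    show ∀ x, g (g⁻¹ x) = x from Equiv.apply_symm_apply g]

lemma permCongr_mul {β : Type*} (e : α ≃ β) (u v : Perm α) :
    e.permCongr (u * v) = e.permCongr u * e.permCongr v := by
  ext x
  simp [Equiv.permCongr_apply, Equiv.Perm.mul_apply]

lemma permCongr_derange {β : Type*} (e : α ≃ β) {u : Perm α} (hu : ∀ p, u p ≠ p) (q : β) :
    (e.permCongr u) q ≠ q := by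
  rw [Equiv.permCongr_apply]
  intro h
  have : u (e.symm q) = e.symm q := by
    have := congrArg (⇑e.symm) h
    rwa [Equiv.symm_apply_apply] at this
  exact hu _ this

lemma permCongr_invol {β : Type*} (e : α ≃ β) {u : Perm α} (hu : ∀ p, u (u p) = p) (q : β) :
    (e.permCongr u) ((e.permCongr u) q) = q := by
  simp [Equiv.permCongr_apply, hu]

lemma ab_of_card_two (h : Fintype.card α = 2) (c : Perm α) : AbCl c := by
  intro y z _ _
  let e := Fintype.equivFinOfCardEq h
  have := fin2comm (e.permCongr y) (e.permCongr z)
  rw [← permCongr_mul, ← permCongr_mul] at this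
  exact (Equiv.permCongr e).injective this

lemma ab_of_card_three (h : Fintype.card α = 3) {c : Perm α} (h1 : ∀ p, c p ≠ p) : AbCl c := by
  intro y z hy hz
  obtain ⟨g, rfl⟩ := hy; obtain ⟨g', rfl⟩ := hz
  let e := Fintype.equivFinOfCardEq h
  have := fin3comm (e.permCongr (g * c * g⁻¹)) (e.permCongr (g' * c * g'⁻¹))
    (permCongr_derange e (conj_derange h1 g)) (permCongr_derange e (conj_derange h1 g'))
  rw [← permCongr_mul, ← permCongr_mul] at this
  exact (Equiv.permCongr e).injective this

lemma ab_of_card_four (h : Fintype.card α = 4) {c : Perm α} (h1 : ∀ p, c p ≠ p)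
    (h2 : ∀ p, c (c p) = p) : AbCl c := by
  intro y z hy hz
  obtain ⟨g, rfl⟩ := hy; obtain ⟨g', rfl⟩ := hz
  let e := Fintype.equivFinOfCardEq h
  have := fin4comm (e.permCongr (g * c * g⁻¹)) (e.permCongr (g' * c * g'⁻¹))
    (permCongr_derange e (conj_derange h1 g)) (permCongr_invol e (conj_invol h2 g))
    (permCongr_derange e (conj_derange h1 g')) (permCongr_invol e (conj_invol h2 g'))
  rw [← permCongr_mul, ← permCongr_mul] at this
  exact (Equiv.permCongr e).injective this

end Specials

section Dich
variable {α : Type*} [DecidableEq α] [Fintype α]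

lemma c3_ne_of_four_le_clen {c : Perm α} {p : α} (hp : c p ≠ p) (h4 : 4 ≤ clen c p) :
    c (c (c p)) ≠ p := by
  intro h
  have h3 : (c ^ (3:ℤ)) p = p := by
    have : c (c (c p)) = (c ^ (3:ℤ)) p := by
      rw [show (3:ℤ) = 1 + (1 + 1) by norm_num, zpow_add, zpow_add, zpow_one]
      simp [Equiv.Perm.mul_apply]
    rw [← this, h]
  rw [clen_zpow_fix_iff hp] at h3
  have := Int.le_of_dvd (by norm_num) h3
  omega

lemma nodup_map_rep (c : Perm α) (rep : ℕ → α) {S : List ℕ}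
    (hS : ∀ ℓ ∈ S, clen c (rep ℓ) = ℓ) (hnd : S.Nodup) : (S.map rep).Nodup :=
  hnd.map_on (fun a ha b hb h => by rw [← hS a ha, ← hS b hb, h])

lemma not_mem_map_rep (c : Perm α) (rep : ℕ → α) {S : List ℕ}
    (hS : ∀ ℓ ∈ S, clen c (rep ℓ) = ℓ) {q : α} {m : ℕ} (hq : clen c q = m) (hm : m ∉ S) :
    q ∉ S.map rep := by
  intro h
  obtain ⟨ℓ, hℓ, he⟩ := List.mem_map.mp h
  apply hm
  have : ℓ = m := by rw [← hS ℓ hℓ, he, hq]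
  rwa [← this]

lemma not_mem_map_rep' (c : Perm α) (rep : ℕ → α) {S : List ℕ}
    (hS : ∀ ℓ ∈ S, clen c (rep ℓ) = ℓ) {q : α} {ℓ' : ℕ} (hq : clen c q = ℓ')
    (hne : q ≠ rep ℓ') : q ∉ S.map rep := by
  intro h
  obtain ⟨m, hm, he⟩ := List.mem_map.mp h
  have : m = ℓ' := by rw [← hS m hm, he, hq]
  exact hne (by rw [← he, this])

lemma ptsL_pairsP (rep : ℕ → α) : ∀ (Q : List (ℕ × ℕ)),
    ptsL (Q.map fun pr => (rep pr.1, rep pr.2)) = (Q.flatMap fun p => [p.1, p.2]).map rep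
  | [] => rfl
  | a :: T => by
    simp only [List.map_cons, ptsL_cons, List.flatMap_cons, List.map_append]
    rw [ptsL_pairsP rep T]
    rfl

theorem dichotomy (c : Perm α) :
    (∃ g : Perm α, ∀ k : ℤ, Commute (c ^ k) (g * c * g⁻¹) → c ^ k = 1) ∨ AbCl c := by
  classical
  by_cases hc1 : c = 1
  · exact Or.inl ⟨1, fun k _ => by rw [hc1, one_zpow]⟩
  obtain ⟨p0, hp0⟩ : ∃ p, c p ≠ p := by
    by_contra h
    push_neg at h
    exact hc1 (Equiv.ext fun q => (h q).trans (Equiv.Perm.one_apply q).symm)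
  set L : Finset ℕ := c.support.image (clen c) with hLdef
  have hrepex : ∀ ℓ : ℕ, ∃ p, ℓ ∈ L → (c p ≠ p ∧ clen c p = ℓ) := by
    intro ℓ
    by_cases h : ℓ ∈ L
    · obtain ⟨p, hp, hcl⟩ := Finset.mem_image.mp h
      exact ⟨p, fun _ => ⟨Equiv.Perm.mem_support.mp hp, hcl⟩⟩
    · exact ⟨p0, fun h' => absurd h' h⟩
  choose rep hrep using hrepex
  set Ls : List ℕ := L.toList with hLs
  have hndL : Ls.Nodup := Finset.nodup_toList L
  have hmemL : ∀ {ℓ : ℕ}, ℓ ∈ Ls ↔ ℓ ∈ L := fun {ℓ} => Finset.mem_toList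
  have h2L : ∀ ℓ ∈ L, 2 ≤ ℓ := by
    intro ℓ h
    obtain ⟨p, hp, hcl⟩ := Finset.mem_image.mp h
    rw [← hcl]
    exact two_le_clen (Equiv.Perm.mem_support.mp hp)
  have hdc : ∀ (k : ℤ) (q : α), (c ^ k) (c q) = c ((c ^ k) q) := fun k q => (cswap c k q).symm
  rcases Nat.even_or_odd Ls.length with hev | hodd
  · -- EVEN branch : pair up all lengths
    set P : List (α × α) := (chunk2 Ls).map (fun pr => (rep pr.1, rep pr.2)) with hP
    have hSin : ∀ ℓ ∈ Ls, c (rep ℓ) ≠ rep ℓ ∧ clen c (rep ℓ) = ℓ :=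
      fun ℓ h => hrep ℓ (hmemL.mp h)
    have hpts : ptsL P = Ls.map rep := by
      rw [hP, ptsL_pairsP, chunk2_bind _ hev]
    have hnodup : (ptsL P).Nodup := by
      rw [hpts]
      exact nodup_map_rep c rep (fun ℓ h => (hSin ℓ h).2) hndL
    refine Or.inl ⟨swapProd P, fun k H => ?_⟩
    have hE := hE_of_commute H
    apply final_ext
    intro ℓ hℓ
    rw [← hLdef] at hℓ
    have hℓLs : ℓ ∈ Ls := hmemL.mpr hℓ
    refine ⟨rep ℓ, (hSin ℓ hℓLs).1, (hSin ℓ hℓLs).2, ?_⟩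
    refine pairs_kill c (swapProd P) rep Ls hSin hndL hev
      (fun ℓ' h' => h2L ℓ' (hmemL.mp h')) ?_ ?_ k hE ℓ hℓLs
    · intro a b hab
      exact swapProd_app hnodup (List.mem_map.mpr ⟨(a, b), hab, rfl⟩)
    · intro ℓ' h' q hsc hne
      apply swapProd_fix
      rw [hpts]
      exact not_mem_map_rep' c rep (fun m hm2 => (hSin m hm2).2)
        (by rw [← clen_same hsc, (hSin ℓ' h').2]) hne
  · -- ODD
    by_cases h4 : ∃ ℓ ∈ L, 4 ≤ ℓ
    · -- LONG branch
      obtain ⟨ℓs, hℓsL, hℓs4⟩ := h4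
      set a0 : α := rep ℓs with ha0
      obtain ⟨ha0mv, ha0cl⟩ := hrep ℓs hℓsL
      rw [← ha0] at ha0mv ha0cl
      set S : List ℕ := Ls.erase ℓs with hS
      have hndS : S.Nodup := hndL.erase ℓs
      have hℓsLs : ℓs ∈ Ls := hmemL.mpr hℓsL
      have hevS : Even S.length := by
        rw [hS, List.length_erase_of_mem hℓsLs]
        rcases hodd with ⟨m, hm⟩
        exact ⟨m, by omega⟩
      have hmemS : ∀ {ℓ}, ℓ ∈ S ↔ (ℓ ≠ ℓs ∧ ℓ ∈ Ls) := fun {ℓ} => hndL.mem_erase_iff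
      have hSin : ∀ ℓ ∈ S, c (rep ℓ) ≠ rep ℓ ∧ clen c (rep ℓ) = ℓ :=
        fun ℓ h => hrep ℓ (hmemL.mp (hmemS.mp h).2)
      have hℓsnS : ℓs ∉ S := fun h => (hmemS.mp h).1 rfl
      set P : List (α × α) := (a0, c a0) :: (chunk2 S).map (fun pr => (rep pr.1, rep pr.2))
        with hP
      have hclca0 : clen c (c a0) = ℓs := by
        rw [← ha0cl]
        exact (clen_same ⟨1, by rw [zpow_one]⟩).symm
      have hpts : ptsL P = a0 :: c a0 :: S.map rep := by
        rw [hP, ptsL_cons, ptsL_pairsP, chunk2_bind _ hevS]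
      have hnodup : (ptsL P).Nodup := by
        rw [hpts]
        refine List.nodup_cons.mpr ⟨?_, List.nodup_cons.mpr ⟨?_, ?_⟩⟩
        · intro h
          rcases List.mem_cons.mp h with h' | h'
          · exact ha0mv h'.symm
          · exact not_mem_map_rep c rep (fun m hm => (hSin m hm).2) ha0cl hℓsnS h'
        · exact not_mem_map_rep c rep (fun m hm => (hSin m hm).2) hclca0 hℓsnS
        · exact nodup_map_rep c rep (fun ℓ h => (hSin ℓ h).2) hndS
      refine Or.inl ⟨swapProd P, fun k H => ?_⟩
      have hE := hE_of_commute H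
      apply final_ext
      intro ℓ hℓ
      rw [← hLdef] at hℓ
      have hℓLs : ℓ ∈ Ls := hmemL.mpr hℓ
      by_cases hll : ℓ = ℓs
      · subst hll
        refine ⟨a0, ha0mv, ha0cl, ?_⟩
        refine kit_long (hdc k) hE ⟨k, rfl⟩ ha0mv
          (csq_ne_of_three_le_clen ha0mv (by omega))
          (c3_ne_of_four_le_clen ha0mv (by omega))
          (swapProd_app hnodup (List.mem_cons_self)).1
          (swapProd_app hnodup (List.mem_cons_self)).2 ?_
        · intro q hsc hq1 hq2
          apply swapProd_fix
          rw [hpts]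
          intro hmem
          rcases List.mem_cons.mp hmem with h' | h'
          · exact hq1 h'
          · rcases List.mem_cons.mp h' with h'' | h''
            · exact hq2 h''
            · exact not_mem_map_rep c rep (fun m hm => (hSin m hm).2)
                (by rw [← clen_same hsc, ha0cl]) hℓsnS h''
      · have hℓS : ℓ ∈ S := hmemS.mpr ⟨hll, hℓLs⟩
        refine ⟨rep ℓ, (hSin ℓ hℓS).1, (hSin ℓ hℓS).2, ?_⟩
        refine pairs_kill c (swapProd P) rep S hSin hndS hevS
          (fun ℓ' h' => h2L ℓ' (hmemL.mp (hmemS.mp h').2)) ?_ ?_ k hE ℓ hℓS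
        · intro a b hab
          exact swapProd_app hnodup
            (List.mem_cons_of_mem _ (List.mem_map.mpr ⟨(a, b), hab, rfl⟩))
        · intro ℓ' h' q hsc hne
          have hclq : clen c q = ℓ' := by rw [← clen_same hsc, (hSin ℓ' h').2]
          apply swapProd_fix
          rw [hpts]
          intro hmem
          have hℓ's : ℓ' ≠ ℓs := (hmemS.mp h').1
          rcases List.mem_cons.mp hmem with h'' | h''
          · exact hℓ's (by rw [← hclq, h'', ha0cl])
          · rcases List.mem_cons.mp h'' with h3 | h3
            · exact hℓ's (by rw [← hclq, h3, hclca0])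
            · exact not_mem_map_rep' c rep (fun m hm2 => (hSin m hm2).2) hclq hne h3
    · by_cases hsupp : c.support = Finset.univ
      · -- supp = univ, all lengths < 4, odd number of lengths
        push_neg at h4
        have hsub : L ⊆ ({2, 3} : Finset ℕ) := by
          intro ℓ h
          have h2' := h2L ℓ h
          have h4' := h4 ℓ h
          simp only [Finset.mem_insert, Finset.mem_singleton]
          omega
        have hcard2 : L.card ≤ 2 := le_trans (Finset.card_le_card hsub) (by decide)
        have hoddc : Odd L.card := by rwa [Finset.length_toList] at hodd
        have hcard1 : L.card = 1 := by
          rcases hoddc with ⟨m, hm⟩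
          omega
        obtain ⟨ℓ0, hL0⟩ := Finset.card_eq_one.mp hcard1
        have hℓ0L : ℓ0 ∈ L := by rw [hL0]; exact Finset.mem_singleton_self ℓ0
        have h2ℓ0 := h2L ℓ0 hℓ0L
        have h4ℓ0 := h4 ℓ0 hℓ0L
        have hallmv : ∀ p : α, c p ≠ p := by
          intro p
          apply Equiv.Perm.mem_support.mp
          rw [hsupp]
          exact Finset.mem_univ p
        have hall : ∀ p : α, clen c p = ℓ0 := by
          intro p
          have hmem : clen c p ∈ L := by
            rw [hLdef]
            exact Finset.mem_image.mpr ⟨p, Equiv.Perm.mem_support.mpr (hallmv p), rfl⟩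
          rw [hL0] at hmem
          exact Finset.mem_singleton.mp hmem
        obtain ⟨hxmv, hxcl⟩ := hrep ℓ0 hℓ0L
        set x : α := rep ℓ0 with hx
        have hAsub : (c.cycleOf x).support ⊆ c.support := Equiv.Perm.support_cycleOf_le c x
        have hAcard : (c.cycleOf x).support.card = ℓ0 := hxcl
        have hcardsupp : c.support.card = Fintype.card α := by
          rw [hsupp]
          exact Finset.card_univ
        rcases (by omega : ℓ0 = 2 ∨ ℓ0 = 3) with hl2 | hl3
        · -- ℓ0 = 2 : involution case
          have hinv : ∀ p, c (c p) = p := by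
            intro p
            have h2c : (clen c p : ℤ) ∣ 2 := by rw [hall p, hl2]; norm_num
            have hfix := (clen_zpow_fix_iff (hallmv p) 2).mpr h2c
            rwa [show (2:ℤ) = 1 + 1 by norm_num, zpow_add, zpow_one,
              Equiv.Perm.mul_apply] at hfix
          by_cases hbig : c.support.card ≤ 4
          · -- abelian special of card 2 or 4
            right
            have hc2 : c ^ (2:ℕ) = 1 := by
              ext p
              rw [pow_succ, pow_one, Equiv.Perm.mul_apply, hinv, Equiv.Perm.one_apply]
            haveI : Fact (Nat.Prime 2) := ⟨Nat.prime_two⟩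
            have horder : orderOf c = 2 := orderOf_eq_prime hc2 hc1
            obtain ⟨n, hn⟩ :=
              Equiv.Perm.cycleType_prime_order (by rw [horder]; exact Nat.prime_two)
            have hsum : c.support.card = (n+1) * 2 := by
              rw [← Equiv.Perm.sum_cycleType, hn, horder, Multiset.sum_replicate, smul_eq_mul]
            have hge2 : 2 ≤ c.support.card := by
              have := Finset.card_le_card hAsub
              omega
            have h24 : c.support.card = 2 ∨ c.support.card = 4 := by omega
            rcases h24 with h2' | h4'
            · exact ab_of_card_two (by rw [← hcardsupp]; exact h2') c
            · exact ab_of_card_four (by rw [← hcardsupp]; exact h4') hallmv hinv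
          · -- at least three 2-cycles : TRIPLE
            left
            have hqne : (c.support \ (c.cycleOf x).support).Nonempty := by
              rw [← Finset.card_pos, Finset.card_sdiff_of_subset hAsub]
              omega
            obtain ⟨q, hqmem⟩ := hqne
            have hqnA := (Finset.mem_sdiff.mp hqmem).2
            have hqmv : c q ≠ q := hallmv q
            have hscxq : ¬ c.SameCycle x q := fun h =>
              hqnA (Equiv.Perm.mem_support_cycleOf_iff.mpr
                ⟨h, Equiv.Perm.mem_support.mpr hxmv⟩)
            have hBsub : (c.cycleOf q).support ⊆ c.support := Equiv.Perm.support_cycleOf_le c q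
            have hBcard : (c.cycleOf q).support.card = 2 := by
              have := hall q
              rw [hl2] at this
              exact this
            have hrne : (c.support \ ((c.cycleOf x).support ∪ (c.cycleOf q).support)).Nonempty := by
              rw [← Finset.card_pos,
                Finset.card_sdiff_of_subset (Finset.union_subset hAsub hBsub)]
              have := Finset.card_union_le (c.cycleOf x).support (c.cycleOf q).support
              omega
            obtain ⟨r, hrmem⟩ := hrne
            have hrnAB := (Finset.mem_sdiff.mp hrmem).2
            rw [Finset.mem_union] at hrnAB
            push_neg at hrnAB
            have hrmv : c r ≠ r := hallmv r
            have hscxr : ¬ c.SameCycle x r := fun h =>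
              hrnAB.1 (Equiv.Perm.mem_support_cycleOf_iff.mpr
                ⟨h, Equiv.Perm.mem_support.mpr hxmv⟩)
            have hscqr : ¬ c.SameCycle q r := fun h =>
              hrnAB.2 (Equiv.Perm.mem_support_cycleOf_iff.mpr
                ⟨h, Equiv.Perm.mem_support.mpr hqmv⟩)
            have hxq : x ≠ q := fun h => hscxq (h ▸ Equiv.Perm.SameCycle.refl c x)
            have hxr : x ≠ r := fun h => hscxr (h ▸ Equiv.Perm.SameCycle.refl c x)
            have hqr : q ≠ r := fun h => hscqr (h ▸ Equiv.Perm.SameCycle.refl c q)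
            -- neighbors distinct from marks
            have hcx_ne_q : c x ≠ q := fun h => hscxq ⟨1, by rw [zpow_one, h]⟩
            have hcx_ne_r : c x ≠ r := fun h => hscxr ⟨1, by rw [zpow_one, h]⟩
            have hcq_ne_x : c q ≠ x := fun h => hscxq (Equiv.Perm.SameCycle.symm ⟨1, by rw [zpow_one, h]⟩)
            have hcq_ne_r : c q ≠ r := fun h => hscqr ⟨1, by rw [zpow_one, h]⟩
            have hcr_ne_x : c r ≠ x := fun h => hscxr (Equiv.Perm.SameCycle.symm ⟨1, by rw [zpow_one, h]⟩)
            have hcr_ne_q : c r ≠ q := fun h => hscqr (Equiv.Perm.SameCycle.symm ⟨1, by rw [zpow_one, h]⟩)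
            refine ⟨Equiv.swap x r * Equiv.swap x q, fun k H => ?_⟩
            have hE := hE_of_commute H
            set G : Perm α := Equiv.swap x r * Equiv.swap x q with hG
            have hGx : G x = q := by
              rw [hG, Equiv.Perm.mul_apply, Equiv.swap_apply_left,
                Equiv.swap_apply_of_ne_of_ne (Ne.symm hxq) hqr]
            have hGq : G q = r := by
              rw [hG, Equiv.Perm.mul_apply, Equiv.swap_apply_right, Equiv.swap_apply_left]
            have hGr : G r = x := by
              rw [hG, Equiv.Perm.mul_apply,
                Equiv.swap_apply_of_ne_of_ne (Ne.symm hxr) (Ne.symm hqr),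
                Equiv.swap_apply_right]
            have horbfix : ∀ m : α, (∀ q', c.SameCycle m q' → q' ≠ m → q' = c m) := by
              intro m q' hsc hne
              have hm := hallmv m
              have hset : (c.cycleOf m).support = {m, c m} := by
                refine (Finset.eq_of_subset_of_card_le ?_ ?_).symm
                · intro t ht
                  rcases Finset.mem_insert.mp ht with h | h
                  · subst h
                    exact Equiv.Perm.mem_support_cycleOf_iff.mpr
                      ⟨Equiv.Perm.SameCycle.refl c t, Equiv.Perm.mem_support.mpr hm⟩
                  · rw [Finset.mem_singleton.mp h]
                    exact Equiv.Perm.mem_support_cycleOf_iff.mpr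
                      ⟨⟨1, by rw [zpow_one]⟩, Equiv.Perm.mem_support.mpr hm⟩
                · have hcm : (c.cycleOf m).support.card = 2 := by
                    have := hall m
                    rw [hl2] at this
                    exact this
                  rw [hcm]
                  exact le_of_eq (Finset.card_pair (fun h => hm h.symm)).symm
              have hq' : q' ∈ (c.cycleOf m).support :=
                Equiv.Perm.mem_support_cycleOf_iff.mpr ⟨hsc, Equiv.Perm.mem_support.mpr hm⟩
              rw [hset] at hq'
              rcases Finset.mem_insert.mp hq' with h | h
              · exact absurd h hne
              · exact Finset.mem_singleton.mp h
            have hGfx : ∀ q', c.SameCycle x q' → q' ≠ x → G q' = q' := by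
              intro q' hsc hne
              rw [horbfix x q' hsc hne, hG, Equiv.Perm.mul_apply,
                Equiv.swap_apply_of_ne_of_ne hxmv hcx_ne_q,
                Equiv.swap_apply_of_ne_of_ne hxmv hcx_ne_r]
            have hGfq : ∀ q', c.SameCycle q q' → q' ≠ q → G q' = q' := by
              intro q' hsc hne
              rw [horbfix q q' hsc hne, hG, Equiv.Perm.mul_apply,
                Equiv.swap_apply_of_ne_of_ne hcq_ne_x hqmv,
                Equiv.swap_apply_of_ne_of_ne hcq_ne_x hcq_ne_r]
            have hGfr : ∀ q', c.SameCycle r q' → q' ≠ r → G q' = q' := by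
              intro q' hsc hne
              rw [horbfix r q' hsc hne, hG, Equiv.Perm.mul_apply,
                Equiv.swap_apply_of_ne_of_ne hcr_ne_x hcr_ne_q,
                Equiv.swap_apply_of_ne_of_ne hcr_ne_x hrmv]
            have hkill := kit_triple (x := x) (y := q) (z := r) (hdc k) hE
              (fun p hp => fixed_zpow hp k) ⟨k, rfl⟩ ⟨k, rfl⟩ ⟨k, rfl⟩
              hscxq hscxr hscqr hGx hGq hGr hGfx hGfq hGfr
            apply final_ext
            intro ℓ hℓ
            rw [← hLdef, hL0] at hℓ
            rw [Finset.mem_singleton.mp hℓ]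
            exact ⟨x, hxmv, hxcl, hkill.1⟩
        · -- ℓ0 = 3
          by_cases hbig : c.support.card ≤ 3
          · right
            have hcard3 : Fintype.card α = 3 := by
              have h3le : 3 ≤ c.support.card := by
                have := Finset.card_le_card hAsub
                omega
              omega
            exact ab_of_card_three hcard3 hallmv
          · left
            have hqne : (c.support \ (c.cycleOf x).support).Nonempty := by
              rw [← Finset.card_pos, Finset.card_sdiff_of_subset hAsub]
              omega
            obtain ⟨q, hqmem⟩ := hqne
            have hqnA := (Finset.mem_sdiff.mp hqmem).2
            have hqmv : c q ≠ q := hallmv q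
            have hscxq : ¬ c.SameCycle x q := fun h =>
              hqnA (Equiv.Perm.mem_support_cycleOf_iff.mpr
                ⟨h, Equiv.Perm.mem_support.mpr hxmv⟩)
            have hxq : x ≠ q := fun h => hscxq (h ▸ Equiv.Perm.SameCycle.refl c x)
            set P : List (α × α) := [(x, q)] with hP
            have hpts : ptsL P = [x, q] := rfl
            have hnodup : (ptsL P).Nodup := by
              rw [hpts]
              simp [hxq]
            refine ⟨swapProd P, fun k H => ?_⟩
            have hE := hE_of_commute H
            have happ := swapProd_app hnodup (List.mem_cons_self (a := (x, q)) (l := []))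
            have hkill := kit_pair (x := x) (y := q) (hdc k) hE ⟨k, rfl⟩ ⟨k, rfl⟩ hscxq
              (csq_ne_of_three_le_clen hxmv (by rw [hxcl, hl3]))
              happ.1 happ.2 ?_ ?_
            · apply final_ext
              intro ℓ hℓ
              rw [← hLdef, hL0] at hℓ
              rw [Finset.mem_singleton.mp hℓ]
              exact ⟨x, hxmv, hxcl, hkill.1⟩
            · intro q' hsc hne
              apply swapProd_fix
              rw [hpts]
              intro hmem
              rcases List.mem_cons.mp hmem with h' | h'
              · exact hne h'
              · rw [List.mem_singleton.mp h'] at hsc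
                exact hscxq hsc
            · intro q' hsc hne
              apply swapProd_fix
              rw [hpts]
              intro hmem
              rcases List.mem_cons.mp hmem with h' | h'
              · rw [h'] at hsc
                exact hscxq hsc.symm
              · exact hne (List.mem_singleton.mp h')
      · -- FIX branch
        obtain ⟨w, hw⟩ : ∃ w, w ∉ c.support := by
          by_contra h
          push_neg at h
          exact hsupp (Finset.eq_univ_iff_forall.mpr h)
        have hwfix : c w = w := by
          by_contra h
          exact hw (Equiv.Perm.mem_support.mpr h)
        obtain ⟨ℓs, S, hcons⟩ : ∃ a T, Ls = a :: T := by
          cases hLs' : Ls with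
          | nil => rw [hLs'] at hodd; simp at hodd
          | cons a T => exact ⟨a, T, rfl⟩
        have hℓsLs : ℓs ∈ Ls := by rw [hcons]; exact List.mem_cons_self
        have hℓsL : ℓs ∈ L := hmemL.mp hℓsLs
        set y : α := rep ℓs with hy
        obtain ⟨hymv, hycl⟩ := hrep ℓs hℓsL
        rw [← hy] at hymv hycl
        have hndcons := hcons ▸ hndL
        have hℓsnS : ℓs ∉ S := (List.nodup_cons.mp hndcons).1
        have hndS : S.Nodup := (List.nodup_cons.mp hndcons).2
        have hevS : Even S.length := by
          rcases hodd with ⟨m, hm⟩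
          rw [hcons] at hm
          simp only [List.length_cons] at hm
          exact ⟨m, by omega⟩
        have hSin : ∀ ℓ ∈ S, c (rep ℓ) ≠ rep ℓ ∧ clen c (rep ℓ) = ℓ :=
          fun ℓ h => hrep ℓ (hmemL.mp (by rw [hcons]; exact List.mem_cons_of_mem _ h))
        set P : List (α × α) := (w, y) :: (chunk2 S).map (fun pr => (rep pr.1, rep pr.2))
          with hP
        have hpts : ptsL P = w :: y :: S.map rep := by
          rw [hP, ptsL_cons, ptsL_pairsP, chunk2_bind _ hevS]
        have hnodup : (ptsL P).Nodup := by
          rw [hpts]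
          refine List.nodup_cons.mpr ⟨?_, List.nodup_cons.mpr ⟨?_, ?_⟩⟩
          · intro h
            rcases List.mem_cons.mp h with h' | h'
            · exact hymv (by rw [← h', hwfix])
            · obtain ⟨m, hm, he⟩ := List.mem_map.mp h'
              exact (hSin m hm).1 (by rw [he, hwfix])
          · exact not_mem_map_rep c rep (fun m hm => (hSin m hm).2) hycl hℓsnS
          · exact nodup_map_rep c rep (fun ℓ h => (hSin ℓ h).2) hndS
        refine Or.inl ⟨swapProd P, fun k H => ?_⟩
        have hE := hE_of_commute H
        apply final_ext
        intro ℓ hℓ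
        rw [← hLdef] at hℓ
        have hℓLs : ℓ ∈ Ls := hmemL.mpr hℓ
        rw [hcons] at hℓLs
        rcases List.mem_cons.mp hℓLs with hll | hℓS
        · subst hll
          refine ⟨y, hymv, hycl, ?_⟩
          refine kit_fix hE ⟨k, rfl⟩ hwfix hymv
            (swapProd_app hnodup (List.mem_cons_self)).1 ?_
          intro q hsc hne
          apply swapProd_fix
          rw [hpts]
          intro hmem
          have hqmv : c q ≠ q := by
            obtain ⟨i, hi⟩ := hsc
            rw [← hi]
            exact zpow_moved hymv i
          rcases List.mem_cons.mp hmem with h' | h'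
          · exact hqmv (by rw [h', hwfix])
          · rcases List.mem_cons.mp h' with h'' | h''
            · exact hne h''
            · exact not_mem_map_rep c rep (fun m hm => (hSin m hm).2)
                (by rw [← clen_same hsc, hycl]) hℓsnS h''
        · refine ⟨rep ℓ, (hSin ℓ hℓS).1, (hSin ℓ hℓS).2, ?_⟩
          refine pairs_kill c (swapProd P) rep S hSin hndS hevS
            (fun ℓ' h' => h2L ℓ' (hmemL.mp (by rw [hcons]; exact List.mem_cons_of_mem _ h'))) ?_ ?_ k hE ℓ hℓS
          · intro a b hab
            exact swapProd_app hnodup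
              (List.mem_cons_of_mem _ (List.mem_map.mpr ⟨(a, b), hab, rfl⟩))
          · intro ℓ' h' q hsc hne
            have hclq : clen c q = ℓ' := by rw [← clen_same hsc, (hSin ℓ' h').2]
            have hqmv : c q ≠ q := by
              obtain ⟨i, hi⟩ := hsc
              rw [← hi]
              exact zpow_moved (hSin ℓ' h').1 i
            apply swapProd_fix
            rw [hpts]
            intro hmem
            rcases List.mem_cons.mp hmem with h'' | h''
            · exact hqmv (by rw [h'', hwfix])
            · rcases List.mem_cons.mp h'' with h3 | h3
              · have hℓ's : ℓ' ≠ ℓs := fun h => hℓsnS (h ▸ h')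
                exact hℓ's (by rw [← hclq, h3, hycl])
              · exact not_mem_map_rep' c rep (fun m hm2 => (hSin m hm2).2) hclq hne h3

end Dich

lemma conj_of_conj {Gp : Type*} [Group Gp] {e c y : Gp} (hc : ∃ h : Gp, h * e * h⁻¹ = c)
    (hy : ∃ u : Gp, u * e * u⁻¹ = y) : ∃ v : Gp, v * c * v⁻¹ = y := by
  obtain ⟨h, rfl⟩ := hc
  obtain ⟨u, rfl⟩ := hy
  exact ⟨u * h⁻¹, by group⟩

/-- Every symmetric group on finitely many letters is good. -/
theorem goodGroup_symmetricGroup (n : ℕ) : GoodGroup (Equiv.Perm (Fin n)) := by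
  intro e _ c hc
  rcases dichotomy c with ⟨g, hg⟩ | hab
  · -- killer branch
    obtain ⟨h, hh⟩ := hc
    refine ⟨g * c * g⁻¹, ⟨g * h, by rw [← hh]; group⟩, ?_⟩
    intro k hk
    have h1 : c ^ k = 1 := hg k hk
    intro h' _
    rw [h1, one_mul, mul_one]
  · -- abelian branch
    refine ⟨c, hc, ?_⟩
    intro k _ h hmem
    have hle : Subgroup.closure (conjClass e) ≤ Subgroup.centralizer {c ^ k} := by
      rw [Subgroup.closure_le]
      intro y hy
      rw [SetLike.mem_coe, Subgroup.mem_centralizer_iff]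
      intro g hg'
      rw [Set.mem_singleton_iff] at hg'
      subst hg'
      have hcy : Commute c y := by
        have := hab c y ⟨1, by group⟩ (conj_of_conj hc hy)
        exact this
      exact (hcy.zpow_left k).eq
    have := hle hmem
    rw [Subgroup.mem_centralizer_iff] at this
    exact this (c ^ k) (Set.mem_singleton _)
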